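/- On ℓ_1 spaces, p-compact equals right p-nuclear: Let 1 ≤ p < ∞, let I be a set and Y a Banach space. If T : ℓ_1(I) → Y is p-compact, then T is right p-nuclear and ν^p(T) = κ_p(T). -/

import Mathlib

noncomputable section

open scoped ENNReal NNReal

/-- The conjugate exponent `p'` of `p : ℝ≥0∞`, characterized by `1/p + 1/p' = 1`
(with the conventions `1' = ∞` and `∞' = 1`). -/
def conjExp (p : ℝ≥0∞) : ℝ≥0∞ := (1 - 1/p)⁻¹

theorem one_le_conjExp (p : ℝ≥0∞) : 1 ≤ conjExp p := by
  rw [conjExp]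
  rw [ENNReal.one_le_inv]
  exact tsub_le_self

instance (p : ℝ≥0∞) : Fact (1 ≤ conjExp p) := ⟨one_le_conjExp p⟩

/-- The `ℓ_p`-norm `(∑ₙ ‖y n‖^p)^(1/p)` of a `p`-summable sequence `y`. -/
def lpNorm {X : Type*} [NormedAddCommGroup X] (p : ℝ≥0∞) (y : ℕ → X)
    (hy : Memℓp y p) : ℝ :=
  ‖(⟨y, hy⟩ : lp (fun _ : ℕ => X) p)‖

/-- The `p`-convex hull of a sequence `x` in `X`, taken with respect to the exponent `q`
(in the applications below, `q` is the conjugate exponent of `p`):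
the set of all sums `∑ₙ αₙ • xₙ` with `(αₙ) ∈ ℓ_q`, `‖(αₙ)‖_q ≤ 1`. -/
def pCo (𝕜 : Type*) [RCLike 𝕜] {X : Type*} [NormedAddCommGroup X] [NormedSpace 𝕜 X]
    (q : ℝ≥0∞) (x : ℕ → X) : Set X :=
  {v | ∃ α : lp (fun _ : ℕ => 𝕜) q, ‖α‖ ≤ 1 ∧ HasSum (fun n => α n • x n) v}

/-- A set `K ⊆ X` is relatively `p`-compact if it is contained in the `p`-convex hull of a
`p`-summable sequence of `X`. -/
def RelPCompact (𝕜 : Type*) [RCLike 𝕜] {X : Type*} [NormedAddCommGroup X]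
    [NormedSpace 𝕜 X] (p : ℝ≥0∞) (K : Set X) : Prop :=
  ∃ x : ℕ → X, Memℓp x p ∧ K ⊆ pCo 𝕜 (conjExp p) x

/-- A bounded linear map is `p`-compact if the image of the closed unit ball is contained in
the `p`-convex hull of a `p`-summable sequence of the target space. -/
def IsPCompact (𝕜 : Type*) [RCLike 𝕜] {X Y : Type*}
    [SeminormedAddCommGroup X] [NormedSpace 𝕜 X]
    [NormedAddCommGroup Y] [NormedSpace 𝕜 Y] (p : ℝ≥0∞) (T : X →L[𝕜] Y) : Prop :=
  ∃ y : ℕ → Y, Memℓp y p ∧ T '' Metric.closedBall 0 1 ⊆ pCo 𝕜 (conjExp p) y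

/-- The `p`-compact norm `κ_p(T) = inf { ‖(yₙ)‖_p : T(B_X) ⊆ p-co((yₙ)) }`. -/
def kappa (𝕜 : Type*) [RCLike 𝕜] {X Y : Type*}
    [SeminormedAddCommGroup X] [NormedSpace 𝕜 X]
    [NormedAddCommGroup Y] [NormedSpace 𝕜 Y] (p : ℝ≥0∞) (T : X →L[𝕜] Y) : ℝ :=
  sInf {c : ℝ | ∃ (y : ℕ → Y) (hy : Memℓp y p),
    T '' Metric.closedBall 0 1 ⊆ pCo 𝕜 (conjExp p) y ∧ c = lpNorm p y hy}

/-- `C` is an upper bound for the weak `ℓ_q`-norm of the sequence `(x'ₙ)` of functionals,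
i.e. `‖(x'ₙ(x))ₙ‖_q ≤ C‖x‖` for every `x` (equivalently,
`sup_{‖x‖ ≤ 1} ‖(x'ₙ(x))ₙ‖_q ≤ C`). -/
def WeakLpBound (𝕜 : Type*) [RCLike 𝕜] {X : Type*} [SeminormedAddCommGroup X]
    [NormedSpace 𝕜 X] (q : ℝ≥0∞) (x' : ℕ → (X →L[𝕜] 𝕜)) (C : ℝ) : Prop :=
  ∀ x : X, ∃ h : Memℓp (fun n => x' n x) q, lpNorm q (fun n => x' n x) h ≤ C * ‖x‖

/-- A bounded linear map `T : X → Y` is right `p`-nuclear if `T x = ∑ₙ x'ₙ(x) yₙ` for some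
weakly `p'`-summable sequence `(x'ₙ)` in `X'` and some `(yₙ)` with `∑ₙ ‖yₙ‖^p < ∞`. -/
def IsRightPNuclear (𝕜 : Type*) [RCLike 𝕜] {X Y : Type*}
    [SeminormedAddCommGroup X] [NormedSpace 𝕜 X]
    [NormedAddCommGroup Y] [NormedSpace 𝕜 Y] (p : ℝ≥0∞) (T : X →L[𝕜] Y) : Prop :=
  ∃ (x' : ℕ → (X →L[𝕜] 𝕜)) (y : ℕ → Y) (C : ℝ), 0 ≤ C ∧
    WeakLpBound 𝕜 (conjExp p) x' C ∧ Memℓp y p ∧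
    ∀ x : X, HasSum (fun n => x' n x • y n) (T x)

/-- The right `p`-nuclear norm
`ν^p(T) = inf ‖(x'ₙ)‖^w_{p'} ⬝ (∑ₙ ‖yₙ‖^p)^{1/p}` over all representations of `T`. -/
def nuP (𝕜 : Type*) [RCLike 𝕜] {X Y : Type*}
    [SeminormedAddCommGroup X] [NormedSpace 𝕜 X]
    [NormedAddCommGroup Y] [NormedSpace 𝕜 Y] (p : ℝ≥0∞) (T : X →L[𝕜] Y) : ℝ :=
  sInf {c : ℝ | ∃ (x' : ℕ → (X →L[𝕜] 𝕜)) (y : ℕ → Y) (C : ℝ) (hy : Memℓp y p), 0 ≤ C ∧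
    WeakLpBound 𝕜 (conjExp p) x' C ∧
    (∀ x : X, HasSum (fun n => x' n x • y n) (T x)) ∧
    c = C * lpNorm p y hy}

set_option maxHeartbeats 1000000
set_option synthInstance.maxHeartbeats 1000000
set_option linter.unusedSectionVars false

section AuxPCompact

variable {𝕜 Y : Type*} [RCLike 𝕜] [NormedAddCommGroup Y] [NormedSpace 𝕜 Y]

lemma conjExp_ne_zero (p : ℝ≥0∞) : conjExp p ≠ 0 :=
  (zero_lt_one.trans_le (one_le_conjExp p)).ne'

lemma isConjExponent_conjExp {p : ℝ≥0∞} (h1 : 1 < p) (hp : p ≠ ∞) :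
    p.toReal.HolderConjugate (conjExp p).toReal := by
  have hp0 : p ≠ 0 := by positivity
  have ha : 1 < p.toReal := by
    rw [← ENNReal.toReal_one]
    exact (ENNReal.toReal_lt_toReal ENNReal.one_ne_top hp).2 h1
  have h1p : 1/p ≤ 1 := by
    rw [ENNReal.div_le_iff hp0 hp]; simpa using h1.le
  have key : (conjExp p).toReal = (1 - (p.toReal)⁻¹)⁻¹ := by
    rw [conjExp, ENNReal.toReal_inv, ENNReal.toReal_sub_of_le h1p ENNReal.one_ne_top,
      one_div, ENNReal.toReal_inv, ENNReal.toReal_one]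
  rw [key]
  rw [Real.holderConjugate_iff]
  constructor
  · exact ha
  · have hane : p.toReal ≠ 0 := by positivity
    have : (1 - (p.toReal)⁻¹) ≠ 0 := by
      have : (p.toReal)⁻¹ < 1 := by rw [inv_lt_one_iff₀]; right; exact ha
      linarith
    field_simp
    ring

/-- Norms of `ℓ₁` elements sum to the norm. -/
lemma hasSum_norm_one' {I : Type*} (x : lp (fun _ : I => 𝕜) 1) :
    HasSum (fun i => ‖x i‖) ‖x‖ := by
  have h := lp.hasSum_norm (p := 1) (by norm_num) x
  simpa using h

/-- Hölder's inequality for conjugate exponents, covering the case `p = 1`. -/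
lemma holder_conjExp {p : ℝ≥0∞} (hp1 : 1 ≤ p) (hp : p ≠ ∞)
    (α : lp (fun _ : ℕ => 𝕜) (conjExp p)) (y : lp (fun _ : ℕ => Y) p) :
    Summable (fun n => ‖α n‖ * ‖y n‖) ∧ ∑' n, ‖α n‖ * ‖y n‖ ≤ ‖α‖ * ‖y‖ := by
  have hbd : ∀ n, ‖α n‖ ≤ ‖α‖ := fun n => lp.norm_apply_le_norm (conjExp_ne_zero p) α n
  rcases eq_or_lt_of_le hp1 with h1 | h1
  · have hps : Summable (fun n => ‖y n‖) := by
      have := (lp.memℓp y).summable (p := p) (by rw [← h1]; norm_num)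
      simpa [← h1] using this
    have hsum : Summable (fun n => ‖α n‖ * ‖y n‖) := by
      refine Summable.of_nonneg_of_le (fun n => by positivity) (fun n => ?_) (hps.mul_left ‖α‖)
      exact mul_le_mul_of_nonneg_right (hbd n) (norm_nonneg _)
    refine ⟨hsum, ?_⟩
    have hynorm : HasSum (fun n => ‖y n‖) ‖y‖ := by
      have h := lp.hasSum_norm (p := p) (by rw [← h1]; norm_num) y
      simpa [← h1] using h
    calc ∑' n, ‖α n‖ * ‖y n‖ ≤ ∑' n, ‖α‖ * ‖y n‖ := by
          refine Summable.tsum_le_tsum (fun n => ?_) hsum (hps.mul_left ‖α‖)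
          exact mul_le_mul_of_nonneg_right (hbd n) (norm_nonneg _)
      _ = ‖α‖ * ∑' n, ‖y n‖ := tsum_mul_left
      _ = ‖α‖ * ‖y‖ := by rw [hynorm.tsum_eq]
  · have hpq := isConjExponent_conjExp h1 hp
    have hf₂ := lp.hasSum_norm hpq.symm.pos α
    have hg₂ := lp.hasSum_norm hpq.pos y
    obtain ⟨C, -, hC', hC⟩ :=
      Real.inner_le_Lp_mul_Lq_hasSum_of_nonneg hpq.symm (lp.norm_nonneg' α) (lp.norm_nonneg' y)
        (fun n => norm_nonneg _) (fun n => norm_nonneg _) hf₂ hg₂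
    rw [← hC.tsum_eq] at hC'
    exact ⟨hC.summable, hC'⟩

/-- The bounded operator `α ↦ ∑ₙ αₙ • yₙ` on `ℓ_{p'}`, for `y ∈ ℓ_p(Y)`. -/
lemma exists_Phi [CompleteSpace Y] {p : ℝ≥0∞} (hp1 : 1 ≤ p) (hp : p ≠ ∞)
    (y : lp (fun _ : ℕ => Y) p) :
    ∃ Φ : lp (fun _ : ℕ => 𝕜) (conjExp p) →L[𝕜] Y,
      ∀ α, HasSum (fun n => α n • y n) (Φ α) := by
  have hsum : ∀ α : lp (fun _ : ℕ => 𝕜) (conjExp p), Summable (fun n => α n • y n) := by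
    intro α
    refine Summable.of_norm ?_
    have := (holder_conjExp hp1 hp α y).1
    simpa [norm_smul] using this
  refine ⟨LinearMap.mkContinuous
    { toFun := fun α => ∑' n, α n • y n
      map_add' := fun α β => by
        simp only [lp.coeFn_add, Pi.add_apply, add_smul]
        exact Summable.tsum_add (hsum α) (hsum β)
      map_smul' := fun c α => by
        simp only [lp.coeFn_smul, Pi.smul_apply, smul_assoc, RingHom.id_apply]
        exact ((hsum α).hasSum.const_smul c).tsum_eq } ‖y‖ (fun α => ?_),
    fun α => (hsum α).hasSum⟩
  calc ‖∑' n, α n • y n‖ ≤ ∑' n, ‖α n • y n‖ := by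
        refine norm_tsum_le_tsum_norm ?_
        have := (holder_conjExp hp1 hp α y).1
        simpa [norm_smul] using this
    _ ≤ ‖α‖ * ‖y‖ := by
        have := (holder_conjExp hp1 hp α y).2
        simpa [norm_smul] using this
    _ = ‖y‖ * ‖α‖ := mul_comm _ _

/-- The synthesis operator `x ↦ ∑ᵢ xᵢ • αᵢ` from `ℓ₁(I)` to `ℓ_q`, for a uniformly
bounded family `α` in `ℓ_q`. -/
lemma exists_A {I : Type*} (q : ℝ≥0∞) [Fact (1 ≤ q)]
    (α : I → lp (fun _ : ℕ => 𝕜) q) (hα : ∀ i, ‖α i‖ ≤ 1) :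
    ∃ A : lp (fun _ : I => 𝕜) 1 →L[𝕜] lp (fun _ : ℕ => 𝕜) q,
      (∀ x, ‖A x‖ ≤ ‖x‖) ∧ ∀ x, HasSum (fun i => x i • α i) (A x) := by
  have hns : ∀ x : lp (fun _ : I => 𝕜) 1, Summable (fun i => ‖x i • α i‖) := by
    intro x
    refine Summable.of_nonneg_of_le (fun i => norm_nonneg _) (fun i => ?_)
      (hasSum_norm_one' x).summable
    rw [norm_smul]
    exact mul_le_of_le_one_right (norm_nonneg _) (hα i)
  have hsum : ∀ x : lp (fun _ : I => 𝕜) 1, Summable (fun i => x i • α i) :=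
    fun x => Summable.of_norm (hns x)
  have hb : ∀ x : lp (fun _ : I => 𝕜) 1, ‖∑' i, x i • α i‖ ≤ ‖x‖ := by
    intro x
    calc ‖∑' i, x i • α i‖ ≤ ∑' i, ‖x i • α i‖ := norm_tsum_le_tsum_norm (hns x)
      _ ≤ ∑' i, ‖x i‖ := by
          refine Summable.tsum_le_tsum (fun i => ?_) (hns x) (hasSum_norm_one' x).summable
          rw [norm_smul]; exact mul_le_of_le_one_right (norm_nonneg _) (hα i)
      _ = ‖x‖ := (hasSum_norm_one' x).tsum_eq
  refine ⟨LinearMap.mkContinuous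
    { toFun := fun x => ∑' i, x i • α i
      map_add' := fun x z => by
        simp only [lp.coeFn_add, Pi.add_apply, add_smul]
        exact Summable.tsum_add (hsum x) (hsum z)
      map_smul' := fun c x => by
        simp only [lp.coeFn_smul, Pi.smul_apply, smul_assoc, RingHom.id_apply]
        exact ((hsum x).hasSum.const_smul c).tsum_eq } 1 (fun x => by simpa using hb x),
    fun x => by simpa using hb x, fun x => (hsum x).hasSum⟩

/-- Evaluation at a coordinate, as a continuous linear functional on `ℓ_q`. -/
def evalCLM (q : ℝ≥0∞) [Fact (1 ≤ q)] (n : ℕ) : lp (fun _ : ℕ => 𝕜) q →L[𝕜] 𝕜 :=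
  LinearMap.mkContinuous
    { toFun := fun f => f n
      map_add' := fun f g => by simp [lp.coeFn_add]
      map_smul' := fun c f => by simp [lp.coeFn_smul] } 1
    (fun f => by
      show ‖(f : ℕ → 𝕜) n‖ ≤ 1 * ‖f‖
      simpa using lp.norm_apply_le_norm (zero_lt_one.trans_le (Fact.out : 1 ≤ q)).ne' f n)

@[simp] lemma evalCLM_apply (q : ℝ≥0∞) [Fact (1 ≤ q)] (n : ℕ)
    (f : lp (fun _ : ℕ => 𝕜) q) : evalCLM (𝕜 := 𝕜) q n f = f n := rfl

end AuxPCompact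

section Bridge

/-- From a `p`-convex-hull inclusion witness, build a right `p`-nuclear representation
with weak bound `1`. -/
lemma exists_nuclear_rep {𝕜 Y : Type*} (I : Type*) [RCLike 𝕜] [NormedAddCommGroup Y]
    [NormedSpace 𝕜 Y] [CompleteSpace Y] {p : ℝ≥0∞} (hp1 : 1 ≤ p) (hp : p ≠ ∞)
    (T : lp (fun _ : I => 𝕜) 1 →L[𝕜] Y) (y : ℕ → Y) (hy : Memℓp y p)
    (hsub : T '' Metric.closedBall 0 1 ⊆ pCo 𝕜 (conjExp p) y) :
    ∃ x' : ℕ → (lp (fun _ : I => 𝕜) 1 →L[𝕜] 𝕜),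
      WeakLpBound 𝕜 (conjExp p) x' 1 ∧ ∀ x, HasSum (fun n => x' n x • y n) (T x) := by
  classical
  have hnorm_e : ∀ i : I, ‖lp.single (E := fun _ : I => 𝕜) 1 i (1 : 𝕜)‖ = 1 := by
    intro i
    have := lp.norm_single (E := fun _ : I => 𝕜) (p := (1 : ℝ≥0∞)) (by norm_num) i (1 : 𝕜)
    simpa using this
  have hmem : ∀ i : I, T (lp.single 1 i (1 : 𝕜)) ∈ pCo 𝕜 (conjExp p) y := by
    intro i
    apply hsub
    refine Set.mem_image_of_mem T ?_
    rw [mem_closedBall_zero_iff, hnorm_e i]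
  choose α hα1 hα2 using hmem
  obtain ⟨A, hAle, hAsum⟩ := exists_A (conjExp p) α hα1
  obtain ⟨Φ, hΦ⟩ := exists_Phi (𝕜 := 𝕜) hp1 hp (⟨y, hy⟩ : lp (fun _ : ℕ => Y) p)
  have hΦα : ∀ i, Φ (α i) = T (lp.single 1 i (1 : 𝕜)) := fun i => (hΦ (α i)).unique (hα2 i)
  have hkey : ∀ x, Φ (A x) = T x := by
    intro x
    have h1 : HasSum (fun i => Φ (x i • α i)) (Φ (A x)) := (hAsum x).mapL Φ
    have h2 : HasSum (fun i => T (lp.single 1 i (x i))) (T x) :=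
      (lp.hasSum_single (by norm_num) x).mapL T
    have heq : ∀ i, Φ (x i • α i) = T (lp.single 1 i (x i)) := by
      intro i
      rw [map_smul, hΦα i, ← map_smul]
      congr 1
      rw [← lp.single_smul]
      norm_num
    rw [funext heq] at h1
    exact h1.unique h2
  refine ⟨fun n => (evalCLM (conjExp p) n).comp A, fun x => ?_, fun x => ?_⟩
  · refine ⟨lp.memℓp (A x), ?_⟩
    show ‖A x‖ ≤ 1 * ‖x‖
    rw [one_mul]
    exact hAle x
  · exact hkey x ▸ hΦ (A x)

/-- From a right `p`-nuclear representation, build a `p`-convex-hull inclusion witness. -/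
lemma kappa_witness {𝕜 X Y : Type*} [RCLike 𝕜] [SeminormedAddCommGroup X] [NormedSpace 𝕜 X]
    [NormedAddCommGroup Y] [NormedSpace 𝕜 Y] {p : ℝ≥0∞} (hp1 : 1 ≤ p)
    (T : X →L[𝕜] Y) (x' : ℕ → (X →L[𝕜] 𝕜)) (y : ℕ → Y) (C : ℝ) (hy : Memℓp y p)
    (hC0 : 0 ≤ C) (hwb : WeakLpBound 𝕜 (conjExp p) x' C)
    (hrep : ∀ x, HasSum (fun n => x' n x • y n) (T x)) :
    ∃ hy' : Memℓp (fun n => (C : 𝕜) • y n) p,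
      T '' Metric.closedBall 0 1 ⊆ pCo 𝕜 (conjExp p) (fun n => (C : 𝕜) • y n) ∧
      lpNorm p (fun n => (C : 𝕜) • y n) hy' = C * lpNorm p y hy := by
  haveI : Fact (1 ≤ p) := ⟨hp1⟩
  set c : 𝕜 := (C : 𝕜) with hc_def
  have hy' : Memℓp (fun n => c • y n) p := hy.const_smul c
  refine ⟨hy', ?_, ?_⟩
  · rintro v ⟨x, hx, rfl⟩
    rw [mem_closedBall_zero_iff] at hx
    obtain ⟨h, hle⟩ := hwb x
    set β : lp (fun _ : ℕ => 𝕜) (conjExp p) := ⟨fun n => x' n x, h⟩ with hβ_def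
    have hβnorm : ‖β‖ ≤ C * ‖x‖ := hle
    by_cases hC : C = 0
    · have hβ0 : β = 0 := by
        rw [← lp.norm_eq_zero_iff]
        refine le_antisymm ?_ (lp.norm_nonneg' β)
        simpa [hC] using hβnorm
      have hzero : ∀ n, x' n x = 0 := by
        intro n
        exact congr_fun (lp.eq_zero_iff_coeFn_eq_zero.mp hβ0) n
      have hTx : T x = 0 := by
        have h3 := hrep x
        have heq0 : (fun n => x' n x • y n) = fun _ => (0 : Y) :=
          funext fun n => by rw [hzero n, zero_smul]
        rw [heq0] at h3
        exact (hasSum_zero.unique h3).symm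
      refine ⟨0, by simp, ?_⟩
      have : (fun n => (0 : lp (fun _ : ℕ => 𝕜) (conjExp p)) n • (c • y n)) =
          fun _ => (0 : Y) := by
        funext n
        rw [lp.coeFn_zero, Pi.zero_apply, zero_smul]
      rw [this, hTx]
      exact hasSum_zero
    · have hCpos : 0 < C := lt_of_le_of_ne hC0 (Ne.symm hC)
      have hc : c ≠ 0 := by
        simp [hc_def, RCLike.ofReal_eq_zero, hC]
      refine ⟨c⁻¹ • β, ?_, ?_⟩
      · rw [norm_smul, norm_inv]
        have hcn : ‖c‖ = C := by
          rw [hc_def, RCLike.norm_ofReal, abs_of_nonneg hC0]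
        rw [hcn]
        calc C⁻¹ * ‖β‖ ≤ C⁻¹ * (C * ‖x‖) := by
              exact mul_le_mul_of_nonneg_left hβnorm (by positivity)
          _ = ‖x‖ := by field_simp
          _ ≤ 1 := hx
      · have heq : (fun n => (c⁻¹ • β) n • (c • y n)) = fun n => x' n x • y n := by
          funext n
          rw [lp.coeFn_smul, Pi.smul_apply, smul_smul, smul_eq_mul]
          congr 1
          have : β n = x' n x := rfl
          rw [this]
          field_simp
        rw [heq]
        exact hrep x
  · have hsm : (⟨fun n => c • y n, hy'⟩ : lp (fun _ : ℕ => Y) p) =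
        c • (⟨y, hy⟩ : lp (fun _ : ℕ => Y) p) := rfl
    show ‖(⟨fun n => c • y n, hy'⟩ : lp (fun _ : ℕ => Y) p)‖ = C * lpNorm p y hy
    rw [hsm, norm_smul, hc_def, RCLike.norm_ofReal, abs_of_nonneg hC0]
    rfl

end Bridge

/-- **On `ℓ_1` spaces, `p`-compact equals right `p`-nuclear.** If `T : ℓ_1(I) → Y` is
`p`-compact, then `T` is right `p`-nuclear and `ν^p(T) = κ_p(T)`. -/
theorem isRightPNuclear_of_isPCompact_lp_one {𝕜 Y : Type*} (I : Type*) [RCLike 𝕜]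
    [NormedAddCommGroup Y] [NormedSpace 𝕜 Y] [CompleteSpace Y]
    (p : ℝ≥0∞) (hp1 : 1 ≤ p) (hp : p ≠ ∞)
    (T : lp (fun _ : I => 𝕜) 1 →L[𝕜] Y) (hT : IsPCompact 𝕜 p T) :
    IsRightPNuclear 𝕜 p T ∧ nuP 𝕜 p T = kappa 𝕜 p T := by
  classical
  obtain ⟨y₀, hy₀, hsub₀⟩ := hT
  obtain ⟨x'₀, hwb₀, hrep₀⟩ := exists_nuclear_rep I hp1 hp T y₀ hy₀ hsub₀
  refine ⟨⟨x'₀, y₀, 1, zero_le_one, hwb₀, hy₀, hrep₀⟩, ?_⟩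
  unfold nuP kappa
  set Sκ := {c : ℝ | ∃ (y : ℕ → Y) (hy : Memℓp y p),
    T '' Metric.closedBall 0 1 ⊆ pCo 𝕜 (conjExp p) y ∧ c = lpNorm p y hy} with hSκ
  set Sν := {c : ℝ | ∃ (x' : ℕ → (lp (fun _ : I => 𝕜) 1 →L[𝕜] 𝕜)) (y : ℕ → Y) (C : ℝ)
    (hy : Memℓp y p), 0 ≤ C ∧ WeakLpBound 𝕜 (conjExp p) x' C ∧
    (∀ x, HasSum (fun n => x' n x • y n) (T x)) ∧ c = C * lpNorm p y hy} with hSν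
  have hν_nonneg : ∀ c ∈ Sν, (0 : ℝ) ≤ c := by
    rintro c ⟨x', y, C, hy, hC0, -, -, rfl⟩
    exact mul_nonneg hC0 (lp.norm_nonneg' (⟨y, hy⟩ : lp (fun _ : ℕ => Y) p))
  have hκ_nonneg : ∀ c ∈ Sκ, (0 : ℝ) ≤ c := by
    rintro c ⟨y, hy, -, rfl⟩
    exact lp.norm_nonneg' (⟨y, hy⟩ : lp (fun _ : ℕ => Y) p)
  have hκν : ∀ c ∈ Sκ, ∃ c' ∈ Sν, c' ≤ c := by
    rintro c ⟨y, hy, hsub, rfl⟩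
    obtain ⟨x', hwb, hrep⟩ := exists_nuclear_rep I hp1 hp T y hy hsub
    exact ⟨1 * lpNorm p y hy, ⟨x', y, 1, hy, zero_le_one, hwb, hrep, rfl⟩,
      le_of_eq (one_mul _)⟩
  have hνκ : ∀ c ∈ Sν, ∃ c' ∈ Sκ, c' ≤ c := by
    rintro c ⟨x', y, C, hy, hC0, hwb, hrep, rfl⟩
    obtain ⟨hy', hsub', heq⟩ := kappa_witness hp1 T x' y C hy hC0 hwb hrep
    exact ⟨lpNorm p (fun n => (C : 𝕜) • y n) hy',
      ⟨fun n => (C : 𝕜) • y n, hy', hsub', rfl⟩, le_of_eq heq⟩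
  have hκne : Sκ.Nonempty := ⟨lpNorm p y₀ hy₀, y₀, hy₀, hsub₀, rfl⟩
  have hνne : Sν.Nonempty :=
    ⟨1 * lpNorm p y₀ hy₀, x'₀, y₀, 1, hy₀, zero_le_one, hwb₀, hrep₀, rfl⟩
  refine le_antisymm ?_ ?_
  · refine le_csInf hκne (fun c hc => ?_)
    obtain ⟨c', hc', hle⟩ := hκν c hc
    exact (csInf_le ⟨0, fun b hb => hν_nonneg b hb⟩ hc').trans hle
  · refine le_csInf hνne (fun c hc => ?_)
    obtain ⟨c', hc', hle⟩ := hνκ c hc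
    exact (csInf_le ⟨0, fun b hb => hκ_nonneg b hb⟩ hc').trans hle
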